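/- Let (X_n)_{n≥0} be a stationary ℝ^d-valued process having the multiple mixing property with respect to a Banach space (B,‖·‖) with constants 0 < θ < 1 and r ≥ 1. Then for every integer p ≥ 1 there exists a constant K > 0, independent of n and φ, such that for every n ≥ 1 and every φ ∈ B with E[φ(X_0)] = 0 and sup_x|φ(x)| ≤ 1: E[(S_n(φ))^{2p}] ≤ K · Σ_{i=1}^{p} n^i · ‖φ(X_0)‖_{L^r}^i · (log(‖φ‖ + θ^{−1}))^{2p−i}. -/

import Mathlib

open MeasureTheory Finset
open scoped ENNReal

noncomputable section

/-- `istar i k = i_1 + ⋯ + i_k`, the partial sums of the gaps `i : Fin p → ℕ`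
(so `istar i 0 = 0`, and `X (istar i 0) = X 0`). -/
def istar {p : ℕ} (i : Fin p → ℕ) (k : ℕ) : ℕ :=
  ∑ j ∈ Finset.univ.filter (fun j : Fin p => (j : ℕ) < k), i j

/-- Stationarity of a process: all shifts have the same law. -/
def IsStationaryProc {d : ℕ} {Ω : Type*} [MeasurableSpace Ω] (P : Measure Ω)
    (X : ℕ → Ω → (Fin d → ℝ)) : Prop :=
  ∀ k : ℕ, Measure.map (fun ω (n : ℕ) => X (n + k) ω) P =
    Measure.map (fun ω (n : ℕ) => X n ω) P

/-- The multiple mixing property of the process `X` with respect to the space `B`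
(with norm `Bnorm`), with constants `0 < θ < 1` and `r ≥ 1`: for every `p ≥ 1`
there are `C > 0`, an exponent `ℓ ∈ ℕ` and a polynomial `Q` in `p` variables with
nonnegative coefficients such that for all gaps `i_1,…,i_p`, every `1 ≤ q ≤ p`
and every centered `φ ∈ B` with `sup|φ| ≤ 1`,
`|Cov(φ(X_0)⋯φ(X_{i_{q-1}^*}), φ(X_{i_q^*})⋯φ(X_{i_p^*}))|
  ≤ C ‖φ(X_0)‖_{L^r} ‖φ‖^ℓ Q(i_1,…,i_p) θ^{i_q}`. -/
def MultipleMixing {d : ℕ} {Ω : Type*} [MeasurableSpace Ω] (P : Measure Ω)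
    (X : ℕ → Ω → (Fin d → ℝ)) (B : Set ((Fin d → ℝ) → ℝ))
    (Bnorm : ((Fin d → ℝ) → ℝ) → ℝ) (θ r : ℝ) : Prop :=
  ∀ p : ℕ, 1 ≤ p →
    ∃ C > (0 : ℝ), ∃ (ℓ : ℕ) (Q : MvPolynomial (Fin p) ℝ),
      (∀ m, 0 ≤ Q.coeff m) ∧
      ∀ (i : Fin p → ℕ) (q : ℕ) (hq : 1 ≤ q) (hqp : q ≤ p),
        ∀ φ ∈ B, (∫ ω, φ (X 0 ω) ∂P) = 0 → (∀ x, |φ x| ≤ 1) →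
          |(∫ ω, (∏ k ∈ Finset.range q, φ (X (istar i k) ω)) *
              (∏ k ∈ Finset.Icc q p, φ (X (istar i k) ω)) ∂P) -
            (∫ ω, ∏ k ∈ Finset.range q, φ (X (istar i k) ω) ∂P) *
            (∫ ω, ∏ k ∈ Finset.Icc q p, φ (X (istar i k) ω) ∂P)| ≤
          C * (∫ ω, |φ (X 0 ω)| ^ r ∂P) ^ (1 / r) * Bnorm φ ^ ℓ *
            MvPolynomial.eval (fun k => (i k : ℝ)) Q * θ ^ (i ⟨q - 1, by omega⟩)


set_option linter.unusedSectionVars false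
set_option linter.unusedVariables false
set_option maxHeartbeats 1000000

def iext {p : ℕ} (i : Fin p → ℕ) (j : ℕ) : ℕ := if h : j < p then i ⟨j, h⟩ else 0

lemma iext_lt {p : ℕ} (i : Fin p → ℕ) {j : ℕ} (h : j < p) : iext i j = i ⟨j, h⟩ := dif_pos h

lemma istar_eq {p : ℕ} (i : Fin p → ℕ) (k : ℕ) :
    istar i k = ∑ j ∈ Finset.range k, iext i j := by
  induction k with
  | zero =>
    simp [istar]
  | succ k ih =>
    rw [Finset.sum_range_succ, ← ih, istar, istar]
    by_cases h : k < p
    · have : (Finset.univ.filter (fun j : Fin p => (j : ℕ) < k + 1)) =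
        insert ⟨k, h⟩ (Finset.univ.filter (fun j : Fin p => (j : ℕ) < k)) := by
        ext j; simp only [Finset.mem_filter, Finset.mem_insert, Finset.mem_univ, true_and]
        constructor
        · intro hj
          by_cases h1 : (j : ℕ) < k
          · exact Or.inr h1
          · exact Or.inl (Fin.ext (show (j:ℕ) = k by omega))
        · rintro (rfl | hj)
          · simp
          · omega
      rw [this, Finset.sum_insert (by simp), iext_lt i h]
      ring
    · have : ∀ j : Fin p, ((j : ℕ) < k + 1) = ((j:ℕ) < k) := by
        intro j; have := j.2; simp only [eq_iff_iff]; omega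
      simp only [this]
      have : iext i k = 0 := dif_neg h
      rw [this, add_zero]

lemma istar_zero {p : ℕ} (i : Fin p → ℕ) : istar i 0 = 0 := by simp [istar_eq]

lemma mvpoly_nonneg {p : ℕ} (Q : MvPolynomial (Fin p) ℝ) (hQ : ∀ m, 0 ≤ Q.coeff m)
    (x : Fin p → ℝ) (hx : ∀ k, 0 ≤ x k) : 0 ≤ MvPolynomial.eval x Q := by
  rw [MvPolynomial.eval_eq']
  apply Finset.sum_nonneg
  intro d hd
  exact mul_nonneg (hQ d) (Finset.prod_nonneg fun k _ => pow_nonneg (hx k) _)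

lemma mvpoly_bound {p : ℕ} (Q : MvPolynomial (Fin p) ℝ) (hQ : ∀ m, 0 ≤ Q.coeff m) :
    ∃ CQ ≥ (0:ℝ), ∀ (i : Fin p → ℕ) (s : ℕ), (∀ k, i k ≤ s) →
      MvPolynomial.eval (fun k => (i k : ℝ)) Q ≤ CQ * ((s:ℝ)+1) ^ Q.totalDegree := by
  refine ⟨∑ d ∈ Q.support, Q.coeff d, Finset.sum_nonneg fun d _ => hQ d, ?_⟩
  intro i s his
  rw [MvPolynomial.eval_eq', Finset.sum_mul]
  apply Finset.sum_le_sum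
  intro d hd
  have h1 : (∏ k : Fin p, ((i k : ℝ)) ^ d k) ≤ ((s:ℝ)+1) ^ Q.totalDegree := by
    calc (∏ k : Fin p, ((i k : ℝ)) ^ d k) ≤ ∏ k : Fin p, ((s:ℝ)+1) ^ d k := by
          apply Finset.prod_le_prod
          · intro k _; positivity
          · intro k _
            apply pow_le_pow_left₀ (by positivity)
            have h := (Nat.cast_le (α := ℝ)).2 (his k); linarith
      _ = ((s:ℝ)+1) ^ (∑ k : Fin p, d k) := by rw [Finset.prod_pow_eq_pow_sum]
      _ ≤ ((s:ℝ)+1) ^ Q.totalDegree := by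
          apply pow_le_pow_right₀ (by have := Nat.cast_nonneg (α := ℝ) s; linarith)
          have h2 := MvPolynomial.le_totalDegree hd
          rwa [Finsupp.sum_fintype _ _ (fun _ => rfl)] at h2
  calc Q.coeff d * ∏ k : Fin p, ((i k : ℝ)) ^ d k ≤ Q.coeff d * ((s:ℝ)+1) ^ Q.totalDegree := by
        apply mul_le_mul_of_nonneg_left h1 (hQ d)
    _ = _ := rfl

lemma geom_poly_bound {ρ : ℝ} (h0 : 0 < ρ) (h1 : ρ < 1) (M : ℕ) :
    ∃ C2 > (0:ℝ), ∀ (n : ℕ) (g : ℕ → ℝ), (∀ s, 0 ≤ g s) →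
      (∀ s, g s ≤ ((s:ℝ)+1) ^ M * ρ ^ s) →
      ∑ s ∈ Finset.range n, g s ≤ C2 := by
  have hsum : Summable (fun s : ℕ => ((s:ℝ)+1) ^ M * ρ ^ s) := by
    have h : Summable (fun s : ℕ => ((s:ℝ)) ^ M * ρ ^ s) :=
      summable_pow_mul_geometric_of_norm_lt_one M (by rw [Real.norm_eq_abs]; rw [abs_of_pos h0]; exact h1)
    have h2 : Summable (fun s : ℕ => (((s+1):ℕ):ℝ) ^ M * ρ ^ (s+1)) :=
      (summable_nat_add_iff 1).2 h
    have h3 : Summable (fun s : ℕ => ρ⁻¹ * ((((s+1):ℕ):ℝ) ^ M * ρ ^ (s+1))) := h2.mul_left _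
    apply h3.congr
    intro s
    push_cast
    rw [pow_succ]
    rw [show ρ⁻¹ * ((↑s + 1) ^ M * (ρ ^ s * ρ)) = ((↑s + 1) ^ M * ρ ^ s) * (ρ * ρ⁻¹) by ring,
      mul_inv_cancel₀ (ne_of_gt h0), mul_one]
  refine ⟨(∑' s : ℕ, ((s:ℝ)+1) ^ M * ρ ^ s) + 1,
    by have : (0:ℝ) ≤ ∑' s : ℕ, ((s:ℝ)+1) ^ M * ρ ^ s :=
         tsum_nonneg (fun s => by positivity)
       linarith, ?_⟩
  intro n g hg0 hgle
  calc ∑ s ∈ Finset.range n, g s ≤ ∑ s ∈ Finset.range n, ((s:ℝ)+1) ^ M * ρ ^ s :=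
        Finset.sum_le_sum (fun s _ => hgle s)
    _ ≤ ∑' s : ℕ, ((s:ℝ)+1) ^ M * ρ ^ s := hsum.sum_le_tsum _ (fun s _ => by positivity)
    _ ≤ _ := by linarith

lemma EMB.sum_le_cases {α β : Type*} (s : Finset α) (f : α → ℝ)
    (hf : ∀ a ∈ s, 0 ≤ f a) (c0 : α → Prop) [DecidablePred c0] (cs : Finset β)
    (c : β → α → Prop) [∀ q, DecidablePred (c q)]
    (h : ∀ a ∈ s, c0 a ∨ ∃ q ∈ cs, c q a) :
    ∑ a ∈ s, f a ≤
      ∑ a ∈ s.filter c0, f a + ∑ q ∈ cs, ∑ a ∈ s.filter (c q), f a := by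
  have key : ∀ a ∈ s, f a ≤
      (if c0 a then f a else 0) + ∑ q ∈ cs, (if c q a then f a else 0) := by
    intro a ha
    have hnn : (0:ℝ) ≤ ∑ q ∈ cs, (if c q a then f a else 0) :=
      Finset.sum_nonneg fun q _ => by split <;> [exact hf a ha; exact le_rfl]
    rcases h a ha with h0 | ⟨q, hq, hc⟩
    · rw [if_pos h0]; linarith
    · have h1 : f a ≤ ∑ q ∈ cs, (if c q a then f a else 0) := by
        have h3 := Finset.single_le_sum (f := fun q => if c q a then f a else 0)
          (fun q _ => by split <;> [exact hf a ha; exact le_rfl]) hq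
        rwa [if_pos hc] at h3
      have h2 : (0:ℝ) ≤ if c0 a then f a else 0 := by
        split <;> [exact hf a ha; exact le_rfl]
      linarith
  calc ∑ a ∈ s, f a ≤
      ∑ a ∈ s, ((if c0 a then f a else 0) + ∑ q ∈ cs, (if c q a then f a else 0)) :=
        Finset.sum_le_sum key
    _ = ∑ a ∈ s.filter c0, f a + ∑ q ∈ cs, ∑ a ∈ s.filter (c q), f a := by
        rw [Finset.sum_add_distrib]
        congr 1
        · rw [Finset.sum_filter]
        · rw [Finset.sum_comm]
          exact Finset.sum_congr rfl fun q _ => (Finset.sum_filter _ _).symm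

lemma EMB.sum_le_count {α β : Type*} [DecidableEq β] (s : Finset α) (F : α → ℝ)
    (g : α → β) (f : β → ℝ) (hf : ∀ b, 0 ≤ f b) (hFf : ∀ a ∈ s, F a ≤ f (g a))
    (t : Finset β) (himg : ∀ a ∈ s, g a ∈ t) (N : β → ℕ)
    (hcard : ∀ b ∈ t, (s.filter (fun a => g a = b)).card ≤ N b) :
    ∑ a ∈ s, F a ≤ ∑ b ∈ t, (N b : ℝ) * f b := by
  calc ∑ a ∈ s, F a ≤ ∑ a ∈ s, f (g a) := Finset.sum_le_sum hFf
    _ = ∑ b ∈ s.image g, ((s.filter fun a => g a = b).card : ℕ) • f b := Finset.sum_comp f g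
    _ ≤ ∑ b ∈ s.image g, (N b : ℝ) * f b := by
        apply Finset.sum_le_sum
        intro b hb
        rw [nsmul_eq_mul]
        apply mul_le_mul_of_nonneg_right _ (hf b)
        have hbt : b ∈ t := by
          rcases Finset.mem_image.1 hb with ⟨a, ha, rfl⟩
          exact himg a ha
        exact_mod_cast hcard b hbt
    _ ≤ ∑ b ∈ t, (N b : ℝ) * f b := by
        apply Finset.sum_le_sum_of_subset_of_nonneg
        · intro b hb
          rcases Finset.mem_image.1 hb with ⟨a, ha, rfl⟩
          exact himg a ha
        · intro b _ _
          exact mul_nonneg (Nat.cast_nonneg _) (hf b)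

section Core
variable {d : ℕ} {Ω : Type*} [MeasurableSpace Ω]

def EMB.lft {m : ℕ} (i : Fin m → ℕ) (q : ℕ) : Fin (q-1) → ℕ := fun j => iext i (j : ℕ)
def EMB.rgt {m : ℕ} (i : Fin m → ℕ) (q : ℕ) : Fin (m-q) → ℕ := fun j => iext i (q + (j : ℕ))

def EMB.Phi (P : Measure Ω) (X : ℕ → Ω → (Fin d → ℝ)) (φ : (Fin d → ℝ) → ℝ)
    (m : ℕ) (i : Fin m → ℕ) : ℝ :=
  |∫ ω, ∏ k ∈ Finset.range (m+1), φ (X (istar i k) ω) ∂P|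

def EMB.Del (P : Measure Ω) (X : ℕ → Ω → (Fin d → ℝ)) (φ : (Fin d → ℝ) → ℝ)
    (m n : ℕ) : ℝ :=
  ∑ i ∈ Fintype.piFinset (fun _ : Fin m => Finset.range n), EMB.Phi P X φ m i

variable (P : Measure Ω) [IsProbabilityMeasure P]
  (X : ℕ → Ω → (Fin d → ℝ)) (hX : ∀ n, Measurable (X n))
  {φ : (Fin d → ℝ) → ℝ} (hφm : Measurable φ) (hφb : ∀ x, |φ x| ≤ 1)

lemma EMB.Phi_nonneg (m : ℕ) (i : Fin m → ℕ) : 0 ≤ EMB.Phi P X φ m i := abs_nonneg _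

lemma EMB.Del_nonneg (m n : ℕ) : 0 ≤ EMB.Del P X φ m n :=
  Finset.sum_nonneg fun i _ => abs_nonneg _

include hX hφm in
lemma EMB.prod_meas (s : Finset ℕ) (j : ℕ → ℕ) :
    Measurable fun ω => ∏ k ∈ s, φ (X (j k) ω) :=
  Finset.measurable_prod _ fun k _ => hφm.comp (hX (j k))

include hφb in
lemma EMB.prod_abs_le_one (s : Finset ℕ) (j : ℕ → ℕ) (ω : Ω) :
    |∏ k ∈ s, φ (X (j k) ω)| ≤ 1 := by
  rw [Finset.abs_prod]
  apply Finset.prod_le_one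
  · intro k _; exact abs_nonneg _
  · intro k _; exact hφb _

include hX hφm hφb in
lemma EMB.prod_integrable (s : Finset ℕ) (j : ℕ → ℕ) :
    Integrable (fun ω => ∏ k ∈ s, φ (X (j k) ω)) P := by
  apply Integrable.mono' (integrable_const (1:ℝ))
    (EMB.prod_meas X hX hφm s j).aestronglyMeasurable
  exact ae_of_all _ fun ω => by
    rw [Real.norm_eq_abs]; exact EMB.prod_abs_le_one (X := X) (hφb := hφb) s j ω

include hX hφm in
lemma EMB.shift_integral (hstat : IsStationaryProc P X)
    (c : ℕ) (s : Finset ℕ) (j : ℕ → ℕ) :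
    ∫ ω, ∏ k ∈ s, φ (X (j k + c) ω) ∂P = ∫ ω, ∏ k ∈ s, φ (X (j k) ω) ∂P := by
  have hF : Measurable (fun ξ : ℕ → (Fin d → ℝ) => ∏ k ∈ s, φ (ξ (j k))) :=
    Finset.measurable_prod _ fun k _ => hφm.comp (measurable_pi_apply (j k))
  have h1 : Measurable (fun ω => fun n : ℕ => X (n + c) ω) :=
    measurable_pi_lambda _ fun n => hX (n + c)
  have h2 : Measurable (fun ω => fun n : ℕ => X n ω) :=
    measurable_pi_lambda _ fun n => hX n
  have e1 : ∫ ω, ∏ k ∈ s, φ (X (j k + c) ω) ∂P =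
      ∫ ξ, ∏ k ∈ s, φ (ξ (j k)) ∂(Measure.map (fun ω (n : ℕ) => X (n + c) ω) P) := by
    rw [integral_map h1.aemeasurable hF.aestronglyMeasurable]
  have e2 : ∫ ω, ∏ k ∈ s, φ (X (j k) ω) ∂P =
      ∫ ξ, ∏ k ∈ s, φ (ξ (j k)) ∂(Measure.map (fun ω (n : ℕ) => X n ω) P) := by
    rw [integral_map h2.aemeasurable hF.aestronglyMeasurable]
  rw [e1, e2, hstat c]

include hX hφm hφb in
lemma EMB.L1_le_Lr {r : ℝ} (hr : 1 ≤ r) :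
    ∫ ω, |φ (X 0 ω)| ∂P ≤ (∫ ω, |φ (X 0 ω)| ^ r ∂P) ^ (1 / r) := by
  have hr0 : (0:ℝ) < r := lt_of_lt_of_le one_pos hr
  set f : Ω → ℝ := fun ω => φ (X 0 ω) with hf
  have hfm : Measurable f := hφm.comp (hX 0)
  have hfam : AEStronglyMeasurable f P := hfm.aestronglyMeasurable
  have hfi : Integrable (fun ω => |f ω|) P := by
    apply Integrable.mono' (integrable_const (1:ℝ)) hfm.abs.aestronglyMeasurable
    exact ae_of_all _ fun ω => by rw [Real.norm_eq_abs, abs_abs]; exact hφb _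
  have hfri : Integrable (fun ω => |f ω| ^ r) P := by
    apply Integrable.mono' (integrable_const (1:ℝ))
      (hfm.abs.pow_const r).aestronglyMeasurable
    refine ae_of_all _ fun ω => ?_
    rw [Real.norm_eq_abs, abs_of_nonneg (Real.rpow_nonneg (abs_nonneg _) r)]
    exact Real.rpow_le_one (abs_nonneg _) (hφb _) (le_of_lt hr0)
  have key : eLpNorm f 1 P ≤ eLpNorm f (ENNReal.ofReal r) P :=
    eLpNorm_le_eLpNorm_of_exponent_le (by
      calc (1 : ℝ≥0∞) = ENNReal.ofReal 1 := by simp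
        _ ≤ ENNReal.ofReal r := ENNReal.ofReal_le_ofReal hr) hfam
  have e1 : eLpNorm f 1 P = ENNReal.ofReal (∫ ω, |f ω| ∂P) := by
    rw [eLpNorm_one_eq_lintegral_enorm,
      ofReal_integral_eq_lintegral_ofReal hfi (ae_of_all _ fun ω => abs_nonneg _)]
    congr 1
    ext ω
    rw [Real.enorm_eq_ofReal_abs]
  have e2 : eLpNorm f (ENNReal.ofReal r) P =
      (ENNReal.ofReal (∫ ω, |f ω| ^ r ∂P)) ^ (1 / r) := by
    rw [eLpNorm_eq_lintegral_rpow_enorm_toReal (by simp [hr0]) (by simp),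
      ENNReal.toReal_ofReal (le_of_lt hr0),
      ofReal_integral_eq_lintegral_ofReal hfri
        (ae_of_all _ fun ω => Real.rpow_nonneg (abs_nonneg _) r)]
    congr 1
    congr 1
    ext ω
    rw [← ENNReal.ofReal_rpow_of_nonneg (abs_nonneg _) (le_of_lt hr0)]
    congr 1
    rw [Real.enorm_eq_ofReal_abs]
  rw [e1, e2] at key
  have hne : (ENNReal.ofReal (∫ ω, |f ω| ^ r ∂P)) ^ (1 / r) ≠ ⊤ := by
    apply ENNReal.rpow_ne_top_of_nonneg (by positivity)
    exact ENNReal.ofReal_ne_top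
  have := ENNReal.toReal_mono hne key
  rw [ENNReal.toReal_ofReal (integral_nonneg fun ω => abs_nonneg _)] at this
  rw [← ENNReal.toReal_rpow, ENNReal.toReal_ofReal
    (integral_nonneg fun ω => Real.rpow_nonneg (abs_nonneg _) r)] at this
  exact this

include hX hφm hφb in
lemma EMB.Phi_le (m : ℕ) (i : Fin m → ℕ) :
    EMB.Phi P X φ m i ≤ ∫ ω, |φ (X 0 ω)| ∂P := by
  have h1 : EMB.Phi P X φ m i ≤ ∫ ω, |∏ k ∈ Finset.range (m+1), φ (X (istar i k) ω)| ∂P := by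
    have := norm_integral_le_integral_norm (μ := P)
      (f := fun ω => ∏ k ∈ Finset.range (m+1), φ (X (istar i k) ω))
    simpa only [Real.norm_eq_abs, EMB.Phi] using this
  refine le_trans h1 (integral_mono ?_ ?_ ?_)
  · exact (EMB.prod_integrable P X hX hφm hφb _ _).abs
  · apply Integrable.mono' (integrable_const (1:ℝ)) (hφm.comp (hX 0)).abs.aestronglyMeasurable
    exact ae_of_all _ fun ω => by rw [Real.norm_eq_abs, abs_abs]; exact hφb _
  · intro ω
    dsimp only
    rw [Finset.prod_range_succ']
    rw [abs_mul, istar_zero]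
    calc |∏ k ∈ Finset.range m, φ (X (istar i (k+1)) ω)| * |φ (X 0 ω)|
        ≤ 1 * |φ (X 0 ω)| := by
          apply mul_le_mul_of_nonneg_right _ (abs_nonneg _)
          rw [Finset.abs_prod]
          apply Finset.prod_le_one (fun k _ => abs_nonneg _) (fun k _ => hφb _)
      _ = |φ (X 0 ω)| := one_mul _

lemma EMB.istar_lft {m : ℕ} (i : Fin m → ℕ) (q : ℕ) (hq : 1 ≤ q) (hqm : q ≤ m)
    {k : ℕ} (hk : k ≤ q - 1) : istar (EMB.lft i q) k = istar i k := by
  rw [istar_eq, istar_eq]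
  apply Finset.sum_congr rfl
  intro j hj
  rw [Finset.mem_range] at hj
  have hj1 : j < q - 1 := by omega
  have hj2 : j < m := by omega
  rw [iext_lt _ hj1, iext_lt _ hj2]
  show iext i _ = _
  rw [iext_lt _ hj2]

lemma EMB.istar_rgt {m : ℕ} (i : Fin m → ℕ) (q : ℕ) (hq : 1 ≤ q) (hqm : q ≤ m)
    {t : ℕ} (ht : t ≤ m - q) : istar i (q + t) = istar (EMB.rgt i q) t + istar i q := by
  rw [istar_eq, istar_eq, istar_eq, Finset.sum_range_add]
  rw [add_comm]
  congr 1
  apply Finset.sum_congr rfl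
  intro j hj
  rw [Finset.mem_range] at hj
  have hj1 : j < m - q := by omega
  rw [iext_lt _ hj1]
  rfl

lemma EMB.Phi_lft {m : ℕ} (i : Fin m → ℕ) (q : ℕ) (hq : 1 ≤ q) (hqm : q ≤ m) :
    |∫ ω, ∏ k ∈ Finset.range q, φ (X (istar i k) ω) ∂P| =
      EMB.Phi P X φ (q-1) (EMB.lft i q) := by
  unfold EMB.Phi
  congr 1
  rw [show q - 1 + 1 = q by omega]
  apply integral_congr_ae
  apply ae_of_all
  intro ω
  apply Finset.prod_congr rfl
  intro k hk
  rw [Finset.mem_range] at hk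
  rw [EMB.istar_lft i q hq hqm (by omega)]

include hX hφm in
lemma EMB.Phi_rgt (hstat : IsStationaryProc P X)
    {m : ℕ} (i : Fin m → ℕ) (q : ℕ) (hq : 1 ≤ q) (hqm : q ≤ m) :
    |∫ ω, ∏ k ∈ Finset.Icc q m, φ (X (istar i k) ω) ∂P| =
      EMB.Phi P X φ (m-q) (EMB.rgt i q) := by
  have e0 : ∀ ω : Ω, ∏ k ∈ Finset.Icc q m, φ (X (istar i k) ω) =
      ∏ t ∈ Finset.range (m - q + 1), φ (X (istar (EMB.rgt i q) t + istar i q) ω) := by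
    intro ω
    rw [show Finset.Icc q m = Finset.Ico q (m+1) by rw [Finset.Ico_add_one_right_eq_Icc]]
    rw [Finset.prod_Ico_eq_prod_range]
    rw [show m + 1 - q = m - q + 1 by omega]
    apply Finset.prod_congr rfl
    intro t ht
    rw [Finset.mem_range] at ht
    rw [EMB.istar_rgt i q hq hqm (by omega)]
  unfold EMB.Phi
  congr 1
  rw [show (∫ ω, ∏ k ∈ Finset.Icc q m, φ (X (istar i k) ω) ∂P) =
    ∫ ω, ∏ t ∈ Finset.range (m - q + 1), φ (X (istar (EMB.rgt i q) t + istar i q) ω) ∂P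
    from integral_congr_ae (ae_of_all _ e0)]
  exact EMB.shift_integral P X hX hφm hstat (istar i q) _ _

omit [IsProbabilityMeasure P] in
lemma EMB.factor (φ : (Fin d → ℝ) → ℝ) (m q n : ℕ) (hq : 1 ≤ q) (hqm : q ≤ m) :
    ∑ i ∈ Fintype.piFinset (fun _ : Fin m => Finset.range n),
      EMB.Phi P X φ (q-1) (EMB.lft i q) * EMB.Phi P X φ (m-q) (EMB.rgt i q)
    = EMB.Del P X φ (q-1) n * ((n:ℝ) * EMB.Del P X φ (m-q) n) := by
  classical
  set A := Fintype.piFinset (fun _ : Fin (q-1) => Finset.range n) with hA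
  set Bf := Fintype.piFinset (fun _ : Fin (m-q) => Finset.range n) with hB
  set T := A ×ˢ ((Finset.range n) ×ˢ Bf) with hT
  have step : ∑ i ∈ Fintype.piFinset (fun _ : Fin m => Finset.range n),
      EMB.Phi P X φ (q-1) (EMB.lft i q) * EMB.Phi P X φ (m-q) (EMB.rgt i q)
      = ∑ x ∈ T, EMB.Phi P X φ (q-1) x.1 * EMB.Phi P X φ (m-q) x.2.2 := by
    apply Finset.sum_nbij' (i := fun i => (EMB.lft i q, (iext i (q-1), EMB.rgt i q)))
      (j := fun x (j : Fin m) =>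
        if h : (j : ℕ) < q - 1 then x.1 ⟨j, h⟩
        else if h2 : (j : ℕ) = q - 1 then x.2.1
        else x.2.2 ⟨(j : ℕ) - q, by have := j.isLt; omega⟩)
    · intro i hi
      rw [Fintype.mem_piFinset] at hi
      rw [hT, Finset.mem_product, Finset.mem_product]
      refine ⟨?_, ?_, ?_⟩
      · rw [Fintype.mem_piFinset]
        intro j
        have hj : (j:ℕ) < m := by have := j.isLt; omega
        show iext i (j:ℕ) ∈ Finset.range n
        rw [iext_lt i hj]
        exact hi _
      · show iext i (q-1) ∈ Finset.range n
        rw [iext_lt i (show q - 1 < m by omega)]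
        exact hi _
      · rw [Fintype.mem_piFinset]
        intro j
        have hj : q + (j:ℕ) < m := by have := j.isLt; omega
        show iext i (q + (j:ℕ)) ∈ Finset.range n
        rw [iext_lt i hj]
        exact hi _
    · intro x hx
      rw [hT, Finset.mem_product, Finset.mem_product] at hx
      obtain ⟨hx1, hx2, hx3⟩ := hx
      rw [Fintype.mem_piFinset] at hx1 hx3
      rw [Fintype.mem_piFinset]
      intro j
      split
      · exact hx1 _
      · split
        · exact hx2
        · exact hx3 _
    · intro i hi
      funext j
      dsimp only
      split
      · rename_i h1
        show iext i (j:ℕ) = i j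
        rw [iext_lt i j.isLt]
      · rename_i h1
        split
        · rename_i h2
          show iext i (q-1) = i j
          rw [iext_lt i (show q - 1 < m by omega)]
          exact congrArg i (Fin.ext h2.symm)
        · rename_i h2
          show iext i (q + ((j:ℕ) - q)) = i j
          rw [show q + ((j:ℕ) - q) = (j:ℕ) by have := j.isLt; omega]
          rw [iext_lt i j.isLt]
    · intro x hx
      refine Prod.ext ?_ (Prod.ext ?_ ?_)
      · funext j
        have hj : (j:ℕ) < m := by have := j.isLt; omega
        dsimp only [EMB.lft]
        rw [iext_lt _ hj]
        dsimp only
        rw [dif_pos (show (j:ℕ) < q - 1 from j.isLt)]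
      · have hq1 : q - 1 < m := by omega
        dsimp only
        rw [iext_lt _ hq1]
        dsimp only
        rw [dif_neg (lt_irrefl _), dif_pos rfl]
      · funext j
        have hj : q + (j:ℕ) < m := by have := j.isLt; omega
        dsimp only [EMB.rgt]
        rw [iext_lt _ hj]
        dsimp only
        rw [dif_neg (by omega), dif_neg (by omega)]
        exact congrArg x.2.2 (Fin.ext (by simp))
    · intro i hi
      rfl
  rw [step, hT, Finset.sum_product]
  calc ∑ a ∈ A, ∑ y ∈ (Finset.range n) ×ˢ Bf, EMB.Phi P X φ (q-1) a * EMB.Phi P X φ (m-q) y.2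
      = ∑ a ∈ A, EMB.Phi P X φ (q-1) a * ∑ y ∈ (Finset.range n) ×ˢ Bf, EMB.Phi P X φ (m-q) y.2 := by
        exact Finset.sum_congr rfl fun a _ => (Finset.mul_sum _ _ _).symm
    _ = (∑ a ∈ A, EMB.Phi P X φ (q-1) a) * ∑ y ∈ (Finset.range n) ×ˢ Bf, EMB.Phi P X φ (m-q) y.2 := by
        rw [Finset.sum_mul]
    _ = EMB.Del P X φ (q-1) n * ((n:ℝ) * EMB.Del P X φ (m-q) n) := by
        congr 1
        rw [Finset.sum_product]
        simp only [Finset.sum_const, nsmul_eq_mul]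
        rw [Finset.card_range]
        rfl

end Core
lemma EMB.main
    {d : ℕ} {Ω : Type*} [MeasurableSpace Ω] (P : Measure Ω) [IsProbabilityMeasure P]
    (X : ℕ → Ω → (Fin d → ℝ)) (hX : ∀ n, Measurable (X n))
    (hstat : IsStationaryProc P X)
    (B : Set ((Fin d → ℝ) → ℝ)) (Bnorm : ((Fin d → ℝ) → ℝ) → ℝ)
    (hBnorm : ∀ φ, 0 ≤ Bnorm φ) (hBmeas : ∀ φ ∈ B, Measurable φ)
    (θ r : ℝ) (hθ0 : 0 < θ) (hθ1 : θ < 1) (hr : 1 ≤ r)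
    (hmix : MultipleMixing P X B Bnorm θ r) :
    ∀ m : ℕ, ∃ K > (0:ℝ), ∀ n : ℕ, 1 ≤ n → ∀ φ ∈ B,
      (∫ ω, φ (X 0 ω) ∂P) = 0 → (∀ x, |φ x| ≤ 1) →
      EMB.Del P X φ m n ≤ K * ∑ w ∈ Finset.Icc 1 ((m+1)/2),
        (n:ℝ)^(w-1) * ((∫ ω, |φ (X 0 ω)| ^ r ∂P) ^ (1/r)) ^ w *
        Real.log (Bnorm φ + θ⁻¹) ^ (m+1-w) := by
  intro m
  induction m using Nat.strong_induction_on with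
  | _ m IH =>
  rcases Nat.eq_zero_or_pos m with rfl | hm
  · -- base case m = 0
    refine ⟨1, one_pos, ?_⟩
    intro n hn φ hφB hcent hφb
    have h1 : EMB.Del P X φ 0 n = 0 := by
      unfold EMB.Del
      have h2 : Fintype.piFinset (fun _ : Fin 0 => Finset.range n) = Finset.univ :=
        Finset.eq_univ_of_forall (fun f => by rw [Fintype.mem_piFinset]; intro a; exact a.elim0)
      rw [h2]
      have h3 : (Finset.univ : Finset (Fin 0 → ℕ)) = {fun x => x.elim0} :=
        Finset.eq_univ_of_forall (fun f => by
          rw [Finset.mem_singleton]; funext x; exact x.elim0) |>.symm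
      rw [h3, Finset.sum_singleton]
      unfold EMB.Phi
      have h4 : ∀ ω : Ω, ∏ k ∈ Finset.range (0+1), φ (X (istar (fun x : Fin 0 => x.elim0) k) ω)
          = φ (X 0 ω) := by
        intro ω
        rw [Finset.prod_range_one, istar_zero]
      rw [integral_congr_ae (ae_of_all _ h4), hcent, abs_zero]
    rw [h1]
    have h5 : Finset.Icc 1 ((0+1)/2) = ∅ := Finset.Icc_eq_empty (by omega)
    rw [h5, Finset.sum_empty, mul_zero]
  · -- inductive step, m ≥ 1
    obtain ⟨C, hC, ℓ, Q, hQc, hcov⟩ := hmix m hm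
    obtain ⟨CQ, hCQ0, hCQ⟩ := mvpoly_bound Q hQc
    have hρ0 : 0 < Real.sqrt θ := Real.sqrt_pos.2 hθ0
    have hρ1 : Real.sqrt θ < 1 := by
      rw [show (1:ℝ) = Real.sqrt 1 by rw [Real.sqrt_one]]
      exact Real.sqrt_lt_sqrt (le_of_lt hθ0) hθ1
    obtain ⟨C2, hC2, hC2sum⟩ := geom_poly_bound hρ0 hρ1 (Q.totalDegree + m)
    choose KK hKKpos hKK using IH
    have hΛ0pos : 0 < Real.log θ⁻¹ := Real.log_pos ((one_lt_inv₀ hθ0).2 hθ1)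
    set Λ0 := Real.log θ⁻¹ with hΛ0def
    set ρ := Real.sqrt θ with hρdef
    set D := Q.totalDegree with hDdef
    set c1 : ℝ := ((2*(ℓ:ℝ)+2)/Λ0)^m with hc1def
    set c2 : ℝ := C * CQ * C2 / Λ0^m with hc2def
    set c3 : ℕ → ℝ := fun q => if h : 1 ≤ q ∧ q ≤ m then
      (m:ℝ)^2 * KK (q-1) (by omega) * KK (m-q) (by omega) else 0 with hc3def
    have hc1nn : 0 ≤ c1 := by positivity
    have hc2nn : 0 ≤ c2 := by positivity
    have hc3nn : ∀ q, 0 ≤ c3 q := by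
      intro q
      rw [hc3def]
      dsimp only
      split
      · rename_i h
        have h1 := hKKpos (q-1) (by omega)
        have h2 := hKKpos (m-q) (by omega)
        positivity
      · exact le_rfl
    refine ⟨c1 + (∑ q ∈ Finset.Icc 1 m, (c2 + c3 q)) + 1, ?_, ?_⟩
    · have : 0 ≤ ∑ q ∈ Finset.Icc 1 m, (c2 + c3 q) :=
        Finset.sum_nonneg fun q _ => add_nonneg hc2nn (hc3nn q)
      linarith
    intro n hn φ hφB hcent hφb
    set L := (∫ ω, |φ (X 0 ω)| ^ r ∂P) ^ (1/r) with hLdef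
    have hL0 : 0 ≤ L := Real.rpow_nonneg
      (integral_nonneg fun ω => Real.rpow_nonneg (abs_nonneg _) r) _
    set Λ := Real.log (Bnorm φ + θ⁻¹) with hΛdef
    have hθinvpos : 0 < θ⁻¹ := inv_pos.2 hθ0
    have hΛΛ0 : Λ0 ≤ Λ := by
      rw [hΛ0def, hΛdef]
      apply Real.log_le_log hθinvpos
      linarith [hBnorm φ]
    have hΛpos : 0 < Λ := lt_of_lt_of_le hΛ0pos hΛΛ0
    set Stgt := ∑ w ∈ Finset.Icc 1 ((m+1)/2), (n:ℝ)^(w-1) * L^w * Λ^(m+1-w) with hSdef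
    have hterm : ∀ w, 0 ≤ (n:ℝ)^(w-1) * L^w * Λ^(m+1-w) := fun w => by positivity
    have hStgt0 : 0 ≤ Stgt := Finset.sum_nonneg fun w _ => hterm w
    have htermle : ∀ w ∈ Finset.Icc 1 ((m+1)/2),
        (n:ℝ)^(w-1) * L^w * Λ^(m+1-w) ≤ Stgt := by
      intro w hw
      exact Finset.single_le_sum (f := fun w => (n:ℝ)^(w-1) * L^w * Λ^(m+1-w))
        (fun w _ => hterm w) hw
    have hw1 : (1:ℕ) ∈ Finset.Icc 1 ((m+1)/2) := Finset.mem_Icc.2 ⟨le_rfl, by omega⟩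
    have hterm1 : L * Λ^m ≤ Stgt := by
      have h := htermle 1 hw1
      have e : (n:ℝ)^(1-1) * L^1 * Λ^(m+1-1) = L * Λ^m := by norm_num
      linarith [h, le_of_eq e.symm]
    -- threshold
    set T := Nat.ceil (2*(ℓ:ℝ)*Λ/Λ0) with hTdef
    have hT1 : ∀ s : ℕ, T < s → Bnorm φ ^ ℓ * θ ^ s ≤ ρ ^ s := by
      intro s hs
      have hBe : Bnorm φ ≤ Real.exp Λ := by
        rw [hΛdef, Real.exp_log (by linarith [hBnorm φ])]
        linarith [hBnorm φ]
      have h1 : Bnorm φ ^ ℓ ≤ Real.exp ((ℓ:ℝ) * Λ) := by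
        calc Bnorm φ ^ ℓ ≤ Real.exp Λ ^ ℓ := pow_le_pow_left₀ (hBnorm φ) hBe ℓ
          _ = Real.exp ((ℓ:ℝ) * Λ) := by rw [← Real.exp_nat_mul]
      have hρs : ρ ^ s = Real.exp ((s:ℝ) * Real.log ρ) := by
        rw [Real.exp_nat_mul, Real.exp_log hρ0]
      have hlogρ : Real.log ρ = -(Λ0/2) := by
        rw [hρdef, Real.log_sqrt (le_of_lt hθ0), hΛ0def, Real.log_inv]
        ring
      have hθs : θ ^ s = ρ ^ s * ρ ^ s := by
        rw [← mul_pow, hρdef, Real.mul_self_sqrt (le_of_lt hθ0)]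
      have hsT : (2*(ℓ:ℝ)*Λ/Λ0) ≤ (s:ℝ) := by
        have hTs : (T:ℝ) ≤ (s:ℝ) := by exact_mod_cast Nat.le_of_lt hs
        refine le_trans ?_ hTs
        rw [hTdef]
        exact Nat.le_ceil _
      rw [div_le_iff₀ hΛ0pos] at hsT
      have hkey : Bnorm φ ^ ℓ * ρ ^ s ≤ 1 := by
        calc Bnorm φ ^ ℓ * ρ ^ s ≤ Real.exp ((ℓ:ℝ)*Λ) * Real.exp ((s:ℝ) * Real.log ρ) := by
              apply mul_le_mul h1 (le_of_eq hρs) (pow_nonneg (le_of_lt hρ0) s)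
                (Real.exp_nonneg _)
          _ = Real.exp ((ℓ:ℝ)*Λ + (s:ℝ) * Real.log ρ) := (Real.exp_add _ _).symm
          _ ≤ 1 := by
              rw [show (1:ℝ) = Real.exp 0 from (Real.exp_zero).symm]
              apply Real.exp_le_exp.2
              rw [hlogρ]
              nlinarith
      calc Bnorm φ ^ ℓ * θ ^ s = (Bnorm φ ^ ℓ * ρ ^ s) * ρ ^ s := by rw [hθs]; ring
        _ ≤ 1 * ρ ^ s := mul_le_mul_of_nonneg_right hkey (pow_nonneg (le_of_lt hρ0) s)
        _ = ρ ^ s := one_mul _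
    have hT2 : (T:ℝ) + 1 ≤ (2*(ℓ:ℝ)+2)/Λ0 * Λ := by
      have h1 : (T:ℝ) ≤ 2*(ℓ:ℝ)*Λ/Λ0 + 1 :=
        le_of_lt (Nat.ceil_lt_add_one (by positivity))
      have h2 : 2*(ℓ:ℝ)*Λ/Λ0 + 2 ≤ (2*(ℓ:ℝ)+2)/Λ0 * Λ := by
        rw [div_mul_eq_mul_div, div_add' _ _ _ (ne_of_gt hΛ0pos), div_le_div_iff₀ hΛ0pos hΛ0pos]
        have h3 : 2 * Λ0 ≤ 2 * Λ := by linarith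
        nlinarith
      linarith
    classical
    -- decomposition of the index set
    have hdec := EMB.sum_le_cases (Fintype.piFinset (fun _ : Fin m => Finset.range n))
      (EMB.Phi P X φ m) (fun i _ => EMB.Phi_nonneg P X m i)
      (fun i => ∀ k, i k ≤ T) (Finset.Icc 1 m)
      (fun q i => (∀ k, i k ≤ iext i (q-1)) ∧ T < iext i (q-1)) ?hcases
    case hcases =>
      intro i hi
      by_cases h0 : ∀ k, i k ≤ T
      · exact Or.inl h0
      · push_neg at h0
        obtain ⟨k0, hk0⟩ := h0
        obtain ⟨kst, _, hkst⟩ := Finset.exists_max_image Finset.univ i ⟨k0, Finset.mem_univ _⟩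
        refine Or.inr ⟨(kst:ℕ)+1, Finset.mem_Icc.2 ⟨by omega, by have := kst.isLt; omega⟩, ?_, ?_⟩
        · intro k
          rw [show (kst:ℕ)+1-1 = (kst:ℕ) by omega]
          rw [iext_lt i kst.isLt]
          exact hkst k (Finset.mem_univ _)
        · rw [show (kst:ℕ)+1-1 = (kst:ℕ) by omega, iext_lt i kst.isLt]
          exact lt_of_lt_of_le hk0 (hkst k0 (Finset.mem_univ _))
    refine le_trans hdec ?_
    -- part (A): small gaps
    have hA : ∑ i ∈ (Fintype.piFinset (fun _ : Fin m => Finset.range n)).filter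
        (fun i => ∀ k, i k ≤ T), EMB.Phi P X φ m i ≤ c1 * Stgt := by
      set Fs := (Fintype.piFinset (fun _ : Fin m => Finset.range n)).filter
        (fun i => ∀ k, i k ≤ T) with hFsdef
      have hcard : Fs.card ≤ (T+1)^m := by
        calc Fs.card ≤ (Fintype.piFinset (fun _ : Fin m => Finset.range (T+1))).card := by
              apply Finset.card_le_card
              intro i hi
              rw [hFsdef, Finset.mem_filter] at hi
              rw [Fintype.mem_piFinset]
              intro k
              rw [Finset.mem_range]
              have := hi.2 k
              omega
          _ = (T+1)^m := by
              rw [Fintype.card_piFinset]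
              simp [Finset.card_range]
      have hPhiL : ∀ i ∈ Fs, EMB.Phi P X φ m i ≤ L := by
        intro i _
        refine le_trans (EMB.Phi_le P X hX (hBmeas φ hφB) hφb m i) ?_
        rw [hLdef]
        exact EMB.L1_le_Lr P X hX (hBmeas φ hφB) hφb hr
      calc ∑ i ∈ Fs, EMB.Phi P X φ m i ≤ Fs.card • L :=
            Finset.sum_le_card_nsmul _ _ _ hPhiL
        _ = (Fs.card : ℝ) * L := nsmul_eq_mul _ _
        _ ≤ (((T+1)^m : ℕ):ℝ) * L := by
            apply mul_le_mul_of_nonneg_right _ hL0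
            exact_mod_cast hcard
        _ ≤ ((2*(ℓ:ℝ)+2)/Λ0 * Λ)^m * L := by
            apply mul_le_mul_of_nonneg_right _ hL0
            have hcast : (((T+1)^m : ℕ):ℝ) = ((T:ℝ)+1)^m := by push_cast; ring
            rw [hcast]
            exact pow_le_pow_left₀ (by positivity) hT2 m
        _ = c1 * (L * Λ^m) := by rw [hc1def, mul_pow]; ring
        _ ≤ c1 * Stgt := mul_le_mul_of_nonneg_left hterm1 hc1nn
    -- part (B): big gap at q
    have hB : ∀ q ∈ Finset.Icc 1 m,
        ∑ i ∈ (Fintype.piFinset (fun _ : Fin m => Finset.range n)).filter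
          (fun i => (∀ k, i k ≤ iext i (q-1)) ∧ T < iext i (q-1)), EMB.Phi P X φ m i
        ≤ (c2 + c3 q) * Stgt := by
      intro q hqmem
      rw [Finset.mem_Icc] at hqmem
      obtain ⟨hq1, hqm⟩ := hqmem
      have hφm' : Measurable φ := hBmeas φ hφB
      set Fs := (Fintype.piFinset (fun _ : Fin m => Finset.range n)).filter
        (fun i => (∀ k, i k ≤ iext i (q-1)) ∧ T < iext i (q-1)) with hFsdef
      set Cov : (Fin m → ℕ) → ℝ := fun i =>
        |(∫ ω, (∏ k ∈ Finset.range q, φ (X (istar i k) ω)) *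
            (∏ k ∈ Finset.Icc q m, φ (X (istar i k) ω)) ∂P) -
          (∫ ω, ∏ k ∈ Finset.range q, φ (X (istar i k) ω) ∂P) *
          (∫ ω, ∏ k ∈ Finset.Icc q m, φ (X (istar i k) ω) ∂P)| with hCovdef
      have hdisj : Disjoint (Finset.range q) (Finset.Icc q m) := by
        rw [Finset.disjoint_left]
        intro a ha hb
        rw [Finset.mem_range] at ha
        rw [Finset.mem_Icc] at hb
        omega
      have hunion : Finset.range q ∪ Finset.Icc q m = Finset.range (m+1) := by
        ext a
        rw [Finset.mem_union, Finset.mem_range, Finset.mem_range, Finset.mem_Icc]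
        omega
      have hsplit : ∀ i : Fin m → ℕ, EMB.Phi P X φ m i ≤
          Cov i + EMB.Phi P X φ (q-1) (EMB.lft i q) * EMB.Phi P X φ (m-q) (EMB.rgt i q) := by
        intro i
        have hprodeq : ∀ ω:Ω, ∏ k ∈ Finset.range (m+1), φ (X (istar i k) ω) =
            (∏ k ∈ Finset.range q, φ (X (istar i k) ω)) *
            (∏ k ∈ Finset.Icc q m, φ (X (istar i k) ω)) := by
          intro ω
          rw [← hunion, Finset.prod_union hdisj]
        have e1 : EMB.Phi P X φ m i =
            |∫ ω, (∏ k ∈ Finset.range q, φ (X (istar i k) ω)) *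
              (∏ k ∈ Finset.Icc q m, φ (X (istar i k) ω)) ∂P| := by
          unfold EMB.Phi
          rw [integral_congr_ae (ae_of_all _ hprodeq)]
        rw [e1, ← EMB.Phi_lft P X i q hq1 hqm,
          ← EMB.Phi_rgt P X hX hφm' hstat i q hq1 hqm, ← abs_mul]
        have habs : ∀ x y : ℝ, |x| ≤ |x - y| + |y| := by
          intro x y
          calc |x| = |(x-y) + y| := by rw [sub_add_cancel]
            _ ≤ |x-y| + |y| := abs_add_le _ _
        exact habs _ _
      have hcovsum : ∑ i ∈ Fs, Cov i ≤ c2 * Stgt := by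
        have step := EMB.sum_le_count Fs Cov (fun i => iext i (q-1))
          (fun s => (C * CQ * L) * (((s:ℝ)+1)^D * ρ^s))
          (fun s => by positivity) ?hFf (Finset.range n) ?himg (fun s => (s+1)^m) ?hcard
        case hFf =>
          intro i hiF
          rw [hFsdef, Finset.mem_filter] at hiF
          obtain ⟨hipi, hile, hiT⟩ := hiF
          have hcv := hcov i q hq1 hqm φ hφB hcent hφb
          have heq : ∀ (h : q-1 < m), i ⟨q-1, h⟩ = iext i (q-1) :=
            fun h => (iext_lt i h).symm
          rw [heq] at hcv
          rw [← hLdef] at hcv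
          have hevalb := hCQ i (iext i (q-1)) hile
          have heval0 : 0 ≤ MvPolynomial.eval (fun k => (i k:ℝ)) Q :=
            mvpoly_nonneg Q hQc _ (fun k => Nat.cast_nonneg _)
          have hbt := hT1 (iext i (q-1)) hiT
          have hLnn : 0 ≤ C * L := mul_nonneg (le_of_lt hC) hL0
          calc Cov i ≤ C * L * Bnorm φ ^ ℓ * MvPolynomial.eval (fun k => (i k:ℝ)) Q
                * θ ^ (iext i (q-1)) := hcv
            _ = (C * L) * MvPolynomial.eval (fun k => (i k:ℝ)) Q *
                (Bnorm φ ^ ℓ * θ ^ (iext i (q-1))) := by ring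
            _ ≤ (C * L) * (CQ * ((iext i (q-1):ℝ)+1)^D) * (ρ ^ (iext i (q-1))) := by
                apply mul_le_mul (mul_le_mul_of_nonneg_left hevalb hLnn) hbt
                  (mul_nonneg (pow_nonneg (hBnorm φ) ℓ) (pow_nonneg (le_of_lt hθ0) _))
                  (by positivity)
            _ = (C * CQ * L) * (((iext i (q-1):ℝ)+1)^D * ρ ^ (iext i (q-1))) := by ring
        case himg =>
          intro i hiF
          rw [hFsdef, Finset.mem_filter] at hiF
          have h := hiF.1
          rw [Fintype.mem_piFinset] at h
          show iext i (q-1) ∈ Finset.range n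
          rw [iext_lt i (show q-1 < m by omega)]
          exact h _
        case hcard =>
          intro s0 hs0
          calc (Fs.filter (fun i => iext i (q-1) = s0)).card
              ≤ (Fintype.piFinset (fun _ : Fin m => Finset.range (s0+1))).card := by
                apply Finset.card_le_card
                intro i hi
                rw [Finset.mem_filter] at hi
                obtain ⟨hiF, his0⟩ := hi
                rw [hFsdef, Finset.mem_filter] at hiF
                rw [Fintype.mem_piFinset]
                intro k
                rw [Finset.mem_range]
                have h1 := hiF.2.1 k
                omega
            _ = (s0+1)^m := by rw [Fintype.card_piFinset]; simp [Finset.card_range]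
        refine le_trans step ?_
        have hb1 : ∑ s ∈ Finset.range n, (((s+1)^m : ℕ):ℝ) *
            ((C*CQ*L) * (((s:ℝ)+1)^D * ρ^s))
            = (C*CQ*L) * ∑ s ∈ Finset.range n, ((s:ℝ)+1)^(D+m) * ρ^s := by
          rw [Finset.mul_sum]
          apply Finset.sum_congr rfl
          intro s _
          push_cast
          rw [pow_add]
          ring
        rw [hb1]
        have hb2 : ∑ s ∈ Finset.range n, ((s:ℝ)+1)^(D+m) * ρ^s ≤ C2 :=
          hC2sum n _ (fun s => by positivity) (fun s => le_rfl)
        have hcl : (0:ℝ) ≤ C * CQ * L := by positivity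
        have hΛ0ne : Λ0^m ≠ 0 := ne_of_gt (pow_pos hΛ0pos m)
        calc (C*CQ*L) * ∑ s ∈ Finset.range n, ((s:ℝ)+1)^(D+m) * ρ^s
            ≤ (C*CQ*L) * C2 := mul_le_mul_of_nonneg_left hb2 hcl
          _ = (C*CQ*C2/Λ0^m) * (Λ0^m * L) := by field_simp
          _ ≤ c2 * (Λ^m * L) := by
              rw [← hc2def]
              apply mul_le_mul_of_nonneg_left _ hc2nn
              exact mul_le_mul_of_nonneg_right
                (pow_le_pow_left₀ (le_of_lt hΛ0pos) hΛΛ0 m) hL0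
          _ ≤ c2 * Stgt := by
              apply mul_le_mul_of_nonneg_left _ hc2nn
              calc Λ^m * L = L * Λ^m := mul_comm _ _
                _ ≤ Stgt := hterm1
      have hprodsum : ∑ i ∈ Fs,
          EMB.Phi P X φ (q-1) (EMB.lft i q) * EMB.Phi P X φ (m-q) (EMB.rgt i q)
          ≤ c3 q * Stgt := by
        have h1 : ∑ i ∈ Fs,
            EMB.Phi P X φ (q-1) (EMB.lft i q) * EMB.Phi P X φ (m-q) (EMB.rgt i q)
            ≤ ∑ i ∈ Fintype.piFinset (fun _ : Fin m => Finset.range n),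
              EMB.Phi P X φ (q-1) (EMB.lft i q) * EMB.Phi P X φ (m-q) (EMB.rgt i q) := by
          apply Finset.sum_le_sum_of_subset_of_nonneg
          · rw [hFsdef]; exact Finset.filter_subset _ _
          · intro i _ _
            exact mul_nonneg (abs_nonneg _) (abs_nonneg _)
        rw [EMB.factor P X φ m q n hq1 hqm] at h1
        have ha : q-1 < m := by omega
        have hb : m-q < m := by omega
        have hDa := hKK (q-1) ha n hn φ hφB hcent hφb
        have hDb := hKK (m-q) hb n hn φ hφB hcent hφb
        rw [← hLdef, ← hΛdef] at hDa hDb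
        set Sa := ∑ w ∈ Finset.Icc 1 ((q-1+1)/2), (n:ℝ)^(w-1) * L^w * Λ^(q-1+1-w) with hSadef
        set Sb := ∑ w ∈ Finset.Icc 1 ((m-q+1)/2), (n:ℝ)^(w-1) * L^w * Λ^(m-q+1-w) with hSbdef
        have hSa0 : 0 ≤ Sa := Finset.sum_nonneg fun w _ => by positivity
        have hSb0 : 0 ≤ Sb := Finset.sum_nonneg fun w _ => by positivity
        have hKa := hKKpos (q-1) ha
        have hKb := hKKpos (m-q) hb
        have hDa0 := EMB.Del_nonneg P X (φ := φ) (q-1) n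
        have hDb0 := EMB.Del_nonneg P X (φ := φ) (m-q) n
        have hcross : (n:ℝ) * Sa * Sb ≤ (m:ℝ)^2 * Stgt := by
          have hIa : ∀ u ∈ Finset.Icc 1 ((q-1+1)/2), ∀ v ∈ Finset.Icc 1 ((m-q+1)/2),
              ((n:ℝ) * ((n:ℝ)^(u-1) * L^u * Λ^(q-1+1-u))) *
                ((n:ℝ)^(v-1) * L^v * Λ^(m-q+1-v)) ≤ Stgt := by
            intro u hu v hv
            rw [Finset.mem_Icc] at hu hv
            have e : ((n:ℝ) * ((n:ℝ)^(u-1) * L^u * Λ^(q-1+1-u))) *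
                ((n:ℝ)^(v-1) * L^v * Λ^(m-q+1-v))
                = (n:ℝ)^(u+v-1) * L^(u+v) * Λ^(m+1-(u+v)) := by
              rw [show u+v-1 = 1 + (u-1) + (v-1) by omega,
                show m+1-(u+v) = (q-1+1-u) + (m-q+1-v) by omega]
              simp only [pow_add, pow_one]
              ring
            rw [e]
            apply htermle
            rw [Finset.mem_Icc]
            omega
          calc (n:ℝ) * Sa * Sb
              = ∑ u ∈ Finset.Icc 1 ((q-1+1)/2), ∑ v ∈ Finset.Icc 1 ((m-q+1)/2),
                ((n:ℝ) * ((n:ℝ)^(u-1) * L^u * Λ^(q-1+1-u))) *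
                  ((n:ℝ)^(v-1) * L^v * Λ^(m-q+1-v)) := by
                rw [show (n:ℝ) * Sa * Sb = Sa * Sb * (n:ℝ) by ring,
                  hSadef, hSbdef, Finset.sum_mul_sum, Finset.sum_mul]
                apply Finset.sum_congr rfl
                intro u _
                rw [Finset.sum_mul]
                apply Finset.sum_congr rfl
                intro v _
                ring
            _ ≤ ∑ u ∈ Finset.Icc 1 ((q-1+1)/2), ∑ v ∈ Finset.Icc 1 ((m-q+1)/2), Stgt :=
                Finset.sum_le_sum (fun u hu => Finset.sum_le_sum (fun v hv => hIa u hu v hv))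
            _ = ((Finset.Icc 1 ((q-1+1)/2)).card : ℝ) *
                (((Finset.Icc 1 ((m-q+1)/2)).card : ℝ) * Stgt) := by
                simp [Finset.sum_const, nsmul_eq_mul]
            _ ≤ (m:ℝ)^2 * Stgt := by
                have hca : (Finset.Icc 1 ((q-1+1)/2)).card ≤ m := by
                  rw [Nat.card_Icc]; omega
                have hcb : (Finset.Icc 1 ((m-q+1)/2)).card ≤ m := by
                  rw [Nat.card_Icc]; omega
                have h1 : ((Finset.Icc 1 ((q-1+1)/2)).card : ℝ) ≤ (m:ℝ) := by exact_mod_cast hca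
                have h2 : ((Finset.Icc 1 ((m-q+1)/2)).card : ℝ) ≤ (m:ℝ) := by exact_mod_cast hcb
                have hm0 : (0:ℝ) ≤ (m:ℝ) := Nat.cast_nonneg m
                calc ((Finset.Icc 1 ((q-1+1)/2)).card : ℝ) *
                    (((Finset.Icc 1 ((m-q+1)/2)).card : ℝ) * Stgt)
                    ≤ (m:ℝ) * ((m:ℝ) * Stgt) := by
                      apply mul_le_mul h1 (mul_le_mul h2 le_rfl hStgt0 hm0)
                        (mul_nonneg (Nat.cast_nonneg _) hStgt0) hm0
                  _ = (m:ℝ)^2 * Stgt := by ring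
        calc ∑ i ∈ Fs,
            EMB.Phi P X φ (q-1) (EMB.lft i q) * EMB.Phi P X φ (m-q) (EMB.rgt i q)
            ≤ EMB.Del P X φ (q-1) n * ((n:ℝ) * EMB.Del P X φ (m-q) n) := h1
          _ ≤ (KK (q-1) ha * Sa) * ((n:ℝ) * (KK (m-q) hb * Sb)) := by
              apply mul_le_mul hDa _ (mul_nonneg (Nat.cast_nonneg n) hDb0)
                (mul_nonneg (le_of_lt hKa) hSa0)
              exact mul_le_mul_of_nonneg_left hDb (Nat.cast_nonneg n)
          _ = (KK (q-1) ha * KK (m-q) hb) * ((n:ℝ) * Sa * Sb) := by ring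
          _ ≤ (KK (q-1) ha * KK (m-q) hb) * ((m:ℝ)^2 * Stgt) :=
              mul_le_mul_of_nonneg_left hcross
                (mul_nonneg (le_of_lt hKa) (le_of_lt hKb))
          _ = ((m:ℝ)^2 * KK (q-1) ha * KK (m-q) hb) * Stgt := by ring
          _ = c3 q * Stgt := by
              congr 1
              rw [hc3def]
              dsimp only
              rw [dif_pos ⟨hq1, hqm⟩]
      calc ∑ i ∈ Fs, EMB.Phi P X φ m i
          ≤ ∑ i ∈ Fs, (Cov i +
            EMB.Phi P X φ (q-1) (EMB.lft i q) * EMB.Phi P X φ (m-q) (EMB.rgt i q)) :=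
            Finset.sum_le_sum (fun i _ => hsplit i)
        _ = ∑ i ∈ Fs, Cov i + ∑ i ∈ Fs,
            EMB.Phi P X φ (q-1) (EMB.lft i q) * EMB.Phi P X φ (m-q) (EMB.rgt i q) :=
            Finset.sum_add_distrib
        _ ≤ c2 * Stgt + c3 q * Stgt := add_le_add hcovsum hprodsum
        _ = (c2 + c3 q) * Stgt := by ring
    calc ∑ i ∈ (Fintype.piFinset (fun _ : Fin m => Finset.range n)).filter
          (fun i => ∀ k, i k ≤ T), EMB.Phi P X φ m i +
        ∑ q ∈ Finset.Icc 1 m, ∑ i ∈ (Fintype.piFinset (fun _ : Fin m => Finset.range n)).filter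
          (fun i => (∀ k, i k ≤ iext i (q-1)) ∧ T < iext i (q-1)), EMB.Phi P X φ m i
        ≤ c1 * Stgt + ∑ q ∈ Finset.Icc 1 m, (c2 + c3 q) * Stgt :=
          add_le_add hA (Finset.sum_le_sum hB)
      _ = (c1 + ∑ q ∈ Finset.Icc 1 m, (c2 + c3 q)) * Stgt := by
          rw [← Finset.sum_mul, add_mul]
      _ ≤ (c1 + (∑ q ∈ Finset.Icc 1 m, (c2 + c3 q)) + 1) * Stgt := by
          apply mul_le_mul_of_nonneg_right _ hStgt0
          linarith



/-- even moment bound under multiple mixing: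
`E[(S_n(φ))^{2p}] ≤ K Σ_{i=1}^p n^i ‖φ(X_0)‖_{L^r}^i (log(‖φ‖ + θ⁻¹))^{2p-i}`. -/
theorem even_moment_bound_of_multipleMixing
    {d : ℕ} {Ω : Type*} [MeasurableSpace Ω] (P : Measure Ω) [IsProbabilityMeasure P]
    (X : ℕ → Ω → (Fin d → ℝ)) (hX : ∀ n, Measurable (X n))
    (hstat : IsStationaryProc P X)
    (B : Set ((Fin d → ℝ) → ℝ)) (Bnorm : ((Fin d → ℝ) → ℝ) → ℝ)
    (hBnorm : ∀ φ, 0 ≤ Bnorm φ) (hBmeas : ∀ φ ∈ B, Measurable φ)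
    (hBbdd : ∀ φ ∈ B, ∃ c : ℝ, ∀ x, |φ x| ≤ c)
    (θ r : ℝ) (hθ0 : 0 < θ) (hθ1 : θ < 1) (hr : 1 ≤ r)
    (hmix : MultipleMixing P X B Bnorm θ r)
    (p : ℕ) (hp : 1 ≤ p) :
    ∃ K > (0 : ℝ), ∀ n : ℕ, 1 ≤ n → ∀ φ ∈ B,
      (∫ ω, φ (X 0 ω) ∂P) = 0 → (∀ x, |φ x| ≤ 1) →
      ∫ ω, (∑ i ∈ Finset.range n, φ (X i ω)) ^ (2 * p) ∂P ≤
        K * ∑ i ∈ Finset.Icc 1 p, (n : ℝ) ^ i *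
          ((∫ ω, |φ (X 0 ω)| ^ r ∂P) ^ (1 / r)) ^ i *
          Real.log (Bnorm φ + θ⁻¹) ^ (2 * p - i) := by
  classical
  have hp2 : 0 < 2*p := by omega
  obtain ⟨K0, hK0, hmain⟩ := EMB.main P X hX hstat B Bnorm hBnorm hBmeas θ r hθ0 hθ1 hr hmix (2*p-1)
  refine ⟨(Nat.factorial (2*p) : ℝ) * K0, by positivity, ?_⟩
  intro n hn φ hφB hcent hφb
  have hφm' : Measurable φ := hBmeas φ hφB
  set pi2 := Fintype.piFinset (fun _ : Fin (2*p) => Finset.range n) with hpi2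
  -- expansion of the power of the sum
  have hexp : ∀ ω:Ω, (∑ i ∈ Finset.range n, φ (X i ω)) ^ (2*p) =
      ∑ g ∈ pi2, ∏ k : Fin (2*p), φ (X (g k) ω) := by
    intro ω
    calc (∑ i ∈ Finset.range n, φ (X i ω)) ^ (2*p)
        = ∏ _k : Fin (2*p), (∑ j ∈ Finset.range n, φ (X j ω)) := by
          rw [Finset.prod_const, Finset.card_univ, Fintype.card_fin]
      _ = ∑ g ∈ pi2, ∏ k : Fin (2*p), φ (X (g k) ω) := Finset.prod_univ_sum _ _
  have hconv : ∀ (g : Fin (2*p) → ℕ) (ω : Ω), ∏ k : Fin (2*p), φ (X (g k) ω) =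
      ∏ k ∈ Finset.range (2*p), φ (X (iext g k) ω) := by
    intro g ω
    rw [← Fin.prod_univ_eq_prod_range (fun k => φ (X (iext g k) ω)) (2*p)]
    apply Finset.prod_congr rfl
    intro k _
    rw [iext_lt g k.isLt]
  have hintg : ∀ g : Fin (2*p) → ℕ,
      Integrable (fun ω => ∏ k : Fin (2*p), φ (X (g k) ω)) P := by
    intro g
    apply (EMB.prod_integrable P X hX hφm' hφb (Finset.range (2*p)) (iext g)).congr
    exact ae_of_all _ fun ω => (hconv g ω).symm
  have hint : ∫ ω, (∑ i ∈ Finset.range n, φ (X i ω)) ^ (2*p) ∂P =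
      ∑ g ∈ pi2, ∫ ω, ∏ k : Fin (2*p), φ (X (g k) ω) ∂P := by
    rw [integral_congr_ae (ae_of_all _ hexp)]
    exact integral_finset_sum _ (fun g _ => hintg g)
  -- sorting
  set sortfun : (Fin (2*p) → ℕ) → (Fin (2*p) → ℕ) :=
    fun g => fun k => g (Tuple.sort g k) with hsortfun
  set gaps : (Fin (2*p) → ℕ) → (Fin (2*p-1) → ℕ) :=
    fun s => fun j => s ⟨(j:ℕ)+1, by have := j.isLt; omega⟩ - s ⟨(j:ℕ), by have := j.isLt; omega⟩
    with hgaps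
  have hsort_mono : ∀ g, Monotone (sortfun g) := fun g => Tuple.monotone_sort g
  have htel : ∀ s : Fin (2*p) → ℕ, Monotone s → ∀ k : ℕ, (hk : k < 2*p) →
      s ⟨k, hk⟩ = s ⟨0, hp2⟩ + istar (gaps s) k := by
    intro s hmono k
    induction k with
    | zero => intro hk; rw [istar_zero, add_zero]
    | succ k ih =>
      intro hk
      have hk' : k < 2*p := by omega
      have hk'' : k < 2*p - 1 := by omega
      have h1 : istar (gaps s) (k+1) = istar (gaps s) k + iext (gaps s) k := by
        rw [istar_eq, istar_eq, Finset.sum_range_succ]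
      have h2 : iext (gaps s) k = s ⟨k+1, hk⟩ - s ⟨k, hk'⟩ := by
        rw [iext_lt _ hk'']
      have h3 : s ⟨k, hk'⟩ ≤ s ⟨k+1, hk⟩ := hmono (by rw [Fin.mk_le_mk]; omega)
      have h4 := ih hk'
      omega
  have hval : ∀ g ∈ pi2, |∫ ω, ∏ k : Fin (2*p), φ (X (g k) ω) ∂P| =
      EMB.Phi P X φ (2*p-1) (gaps (sortfun g)) := by
    intro g hg
    have hperm : ∀ ω : Ω, ∏ k : Fin (2*p), φ (X (g k) ω) =
        ∏ k : Fin (2*p), φ (X (sortfun g k) ω) :=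
      fun ω => (Equiv.prod_comp (Tuple.sort g) (fun k => φ (X (g k) ω))).symm
    have hmono := hsort_mono g
    have hstep : ∀ ω : Ω, ∏ k : Fin (2*p), φ (X (sortfun g k) ω) =
        ∏ k ∈ Finset.range (2*p),
          φ (X (istar (gaps (sortfun g)) k + sortfun g ⟨0, hp2⟩) ω) := by
      intro ω
      rw [← Fin.prod_univ_eq_prod_range
        (fun k => φ (X (istar (gaps (sortfun g)) k + sortfun g ⟨0, hp2⟩) ω)) (2*p)]
      apply Finset.prod_congr rfl
      intro k _
      have := htel (sortfun g) hmono (k:ℕ) k.isLt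
      rw [show (⟨(k:ℕ), k.isLt⟩ : Fin (2*p)) = k from Fin.eta k k.isLt] at this
      rw [this, add_comm]
    rw [integral_congr_ae (ae_of_all _ hperm), integral_congr_ae (ae_of_all _ hstep)]
    rw [EMB.shift_integral P X hX hφm' hstat (sortfun g ⟨0, hp2⟩) (Finset.range (2*p))
      (fun k => istar (gaps (sortfun g)) k)]
    unfold EMB.Phi
    rw [show 2*p-1+1 = 2*p by omega]
  -- counting: first by the sorting map, then by the gap map
  have hcount1 : ∑ g ∈ pi2, |∫ ω, ∏ k : Fin (2*p), φ (X (g k) ω) ∂P| ≤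
      ∑ b ∈ pi2.image sortfun, ((Nat.factorial (2*p) : ℝ)) *
        EMB.Phi P X φ (2*p-1) (gaps b) := by
    apply EMB.sum_le_count pi2 _ sortfun (fun b => EMB.Phi P X φ (2*p-1) (gaps b))
      (fun b => EMB.Phi_nonneg P X _ _) (fun g hg => le_of_eq (hval g hg))
      (pi2.image sortfun) (fun g hg => Finset.mem_image_of_mem _ hg)
      (fun _ => Nat.factorial (2*p))
    intro b hb
    have hsub : pi2.filter (fun g => sortfun g = b) ⊆
        (Finset.univ : Finset (Equiv.Perm (Fin (2*p)))).image (fun σ => fun k => b (σ k)) := by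
      intro g hg
      rw [Finset.mem_filter] at hg
      obtain ⟨hg1, hg2⟩ := hg
      rw [Finset.mem_image]
      refine ⟨(Tuple.sort g)⁻¹, Finset.mem_univ _, ?_⟩
      funext k
      have := congrFun hg2 ((Tuple.sort g)⁻¹ k)
      rw [hsortfun] at this
      dsimp only at this
      rw [show (Tuple.sort g) ((Tuple.sort g)⁻¹ k) = k from (Tuple.sort g).apply_symm_apply k] at this
      exact this.symm
    calc (pi2.filter (fun g => sortfun g = b)).card
        ≤ ((Finset.univ : Finset (Equiv.Perm (Fin (2*p)))).image
            (fun σ => fun k => b (σ k))).card := Finset.card_le_card hsub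
      _ ≤ (Finset.univ : Finset (Equiv.Perm (Fin (2*p)))).card := Finset.card_image_le
      _ = Nat.factorial (2*p) := by
          rw [Finset.card_univ, Fintype.card_perm, Fintype.card_fin]
  have hmem_img : ∀ b ∈ pi2.image sortfun, (∀ k, b k ∈ Finset.range n) ∧ Monotone b := by
    intro b hb
    rw [Finset.mem_image] at hb
    obtain ⟨g, hg, rfl⟩ := hb
    rw [hpi2, Fintype.mem_piFinset] at hg
    exact ⟨fun k => hg _, hsort_mono g⟩
  have hcount2 : ∑ b ∈ pi2.image sortfun, EMB.Phi P X φ (2*p-1) (gaps b) ≤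
      ∑ i ∈ Fintype.piFinset (fun _ : Fin (2*p-1) => Finset.range n),
        (n:ℝ) * EMB.Phi P X φ (2*p-1) i := by
    apply EMB.sum_le_count (pi2.image sortfun) _ gaps (EMB.Phi P X φ (2*p-1))
      (fun i => EMB.Phi_nonneg P X _ _) (fun b _ => le_rfl)
      _ ?himg2 (fun _ => n) ?hcard2
    case himg2 =>
      intro b hb
      obtain ⟨hbr, hbm⟩ := hmem_img b hb
      rw [Fintype.mem_piFinset]
      intro j
      rw [hgaps]
      dsimp only
      rw [Finset.mem_range]
      have h1 := hbr ⟨(j:ℕ)+1, by have := j.isLt; omega⟩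
      rw [Finset.mem_range] at h1
      omega
    case hcard2 =>
      intro i hi
      have hinj : Set.InjOn (fun b : Fin (2*p) → ℕ => b ⟨0, hp2⟩)
          ((pi2.image sortfun).filter (fun b => gaps b = i)) := by
        intro b hbmem b' hbmem' h0
        simp only [Finset.coe_filter, Set.mem_setOf_eq] at hbmem hbmem'
        obtain ⟨hb1, hb2⟩ := hbmem
        obtain ⟨hb1', hb2'⟩ := hbmem'
        have hmb := (hmem_img b hb1).2
        have hmb' := (hmem_img b' hb1').2
        funext k
        have e1 := htel b hmb (k:ℕ) k.isLt
        have e2 := htel b' hmb' (k:ℕ) k.isLt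
        rw [show (⟨(k:ℕ), k.isLt⟩ : Fin (2*p)) = k from Fin.eta k k.isLt] at e1 e2
        dsimp only at h0
        rw [e1, e2, hb2, hb2', h0]
      calc ((pi2.image sortfun).filter (fun b => gaps b = i)).card
          ≤ (Finset.range n).card := by
            apply Finset.card_le_card_of_injOn (fun b => b ⟨0, hp2⟩) _ hinj
            intro b hb
            rw [Finset.mem_coe, Finset.mem_filter] at hb
            exact (hmem_img b hb.1).1 _
        _ = n := Finset.card_range n
  -- put everything together
  have hLr0 : 0 ≤ (∫ ω, |φ (X 0 ω)| ^ r ∂P) ^ (1/r) :=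
    Real.rpow_nonneg (integral_nonneg fun ω => Real.rpow_nonneg (abs_nonneg _) r) _
  have hΛ00 : 0 ≤ Real.log (Bnorm φ + θ⁻¹) := by
    apply Real.log_nonneg
    have h1 : 1 < θ⁻¹ := (one_lt_inv₀ hθ0).2 hθ1
    linarith [hBnorm φ]
  have hdel := hmain n hn φ hφB hcent hφb
  calc ∫ ω, (∑ i ∈ Finset.range n, φ (X i ω)) ^ (2*p) ∂P
      = ∑ g ∈ pi2, ∫ ω, ∏ k : Fin (2*p), φ (X (g k) ω) ∂P := hint
    _ ≤ ∑ g ∈ pi2, |∫ ω, ∏ k : Fin (2*p), φ (X (g k) ω) ∂P| :=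
        Finset.sum_le_sum (fun g _ => le_abs_self _)
    _ ≤ ∑ b ∈ pi2.image sortfun, ((Nat.factorial (2*p) : ℝ)) *
        EMB.Phi P X φ (2*p-1) (gaps b) := hcount1
    _ = (Nat.factorial (2*p) : ℝ) * ∑ b ∈ pi2.image sortfun,
        EMB.Phi P X φ (2*p-1) (gaps b) := by rw [Finset.mul_sum]
    _ ≤ (Nat.factorial (2*p) : ℝ) * ∑ i ∈ Fintype.piFinset
          (fun _ : Fin (2*p-1) => Finset.range n), (n:ℝ) * EMB.Phi P X φ (2*p-1) i := by
        apply mul_le_mul_of_nonneg_left hcount2 (Nat.cast_nonneg _)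
    _ = (Nat.factorial (2*p) : ℝ) * ((n:ℝ) * EMB.Del P X φ (2*p-1) n) := by
        rw [← Finset.mul_sum]
        rfl
    _ ≤ (Nat.factorial (2*p) : ℝ) * ((n:ℝ) * (K0 * ∑ w ∈ Finset.Icc 1 ((2*p-1+1)/2),
        (n:ℝ)^(w-1) * ((∫ ω, |φ (X 0 ω)| ^ r ∂P) ^ (1/r)) ^ w *
        Real.log (Bnorm φ + θ⁻¹) ^ (2*p-1+1-w))) := by
        apply mul_le_mul_of_nonneg_left _ (Nat.cast_nonneg _)
        exact mul_le_mul_of_nonneg_left hdel (Nat.cast_nonneg _)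
    _ = (Nat.factorial (2*p) : ℝ) * K0 * ∑ i ∈ Finset.Icc 1 p, (n:ℝ)^i *
        ((∫ ω, |φ (X 0 ω)| ^ r ∂P) ^ (1/r)) ^ i *
        Real.log (Bnorm φ + θ⁻¹) ^ (2*p-i) := by
        rw [show (2*p-1+1)/2 = p by omega]
        simp only [Finset.mul_sum]
        apply Finset.sum_congr rfl
        intro w hw
        rw [Finset.mem_Icc] at hw
        rw [show 2*p-1+1-w = 2*p-w by omega]
        rw [show (n:ℝ)^w = (n:ℝ) * (n:ℝ)^(w-1) by
          rw [← pow_succ']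
          congr 1
          omega]
        ring

end
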